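/- Let G be a compact Lie group which is an extension 1 → T^n → G → C_p → 1 with non-trivial conjugation action of C_p on T^n. Then the fixed-point subgroup (T^n)^{C_p} of the conjugation action coincides with the centre Z(G) of G. -/

import Mathlib

/-- Let `G` be a compact (Lie) group which is an extension
`1 → T^n → G → C_p → 1`: `T` is a closed normal subgroup, topologically isomorphic to
the `n`-torus `Fin n → Circle`, and `G ⧸ T` has prime order `p`.  Assume the conjugation
action of `C_p` on `T^n` is non-trivial (some conjugation does not fix `T` pointwise).
Then the fixed-point subgroup `(T^n)^{C_p}` of the conjugation action — the set of
`t ∈ T` fixed by conjugation by every element of `G` (conjugation by elements of the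
abelian `T` is automatically trivial on `T`) — coincides with the centre `Z(G)`. -/
theorem stmt_8 (p n : ℕ) (hp : p.Prime) (hn : 1 ≤ n)
    (G : Type*) [Group G] [TopologicalSpace G] [IsTopologicalGroup G] [CompactSpace G]
    (T : Subgroup G) [T.Normal] (hTclosed : IsClosed (T : Set G))
    (e : T ≃* (Fin n → Circle)) (he : Continuous e) (he' : Continuous e.symm)
    (hcard : Nat.card (G ⧸ T) = p)
    (hnontriv : ¬ ∀ g : G, ∀ t ∈ T, g * t * g⁻¹ = t) :
    {t : G | t ∈ T ∧ ∀ g : G, g * t * g⁻¹ = t} = (Subgroup.center G : Set G) := by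
  -- T is abelian since it is isomorphic to a torus
  have hTcomm : ∀ a b : G, a ∈ T → b ∈ T → a * b = b * a := by
    intro a b ha hb
    have h : (⟨a, ha⟩ : T) * ⟨b, hb⟩ = ⟨b, hb⟩ * ⟨a, ha⟩ :=
      e.injective (by rw [map_mul, map_mul, mul_comm])
    exact Subtype.ext_iff.mp h
  ext z
  simp only [Set.mem_setOf_eq, SetLike.mem_coe, Subgroup.mem_center_iff]
  constructor
  · rintro ⟨hzT, hcomm⟩ g
    have h := hcomm g
    rw [mul_inv_eq_iff_eq_mul] at h
    exact h
  · intro hz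
    refine ⟨?_, fun g => by rw [hz g, mul_inv_cancel_right]⟩
    by_contra hzT
    apply hnontriv
    intro g t' ht'
    -- G ⧸ T is finite of prime order
    haveI : Finite (G ⧸ T) := Nat.finite_of_card_ne_zero (by rw [hcard]; exact hp.pos.ne')
    have hne : ((z : G ⧸ T) : G ⧸ T) ≠ 1 := fun h => hzT ((QuotientGroup.eq_one_iff z).mp h)
    have ho : orderOf ((z : G ⧸ T)) = p := by
      have hd : orderOf ((z : G ⧸ T)) ∣ p := hcard ▸ orderOf_dvd_natCard _
      rcases hp.eq_one_or_self_of_dvd _ hd with h | h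
      · exact absurd (orderOf_eq_one_iff.mp h) hne
      · exact h
    have htop : Subgroup.zpowers ((z : G ⧸ T)) = ⊤ := by
      have hcardz : Nat.card (Subgroup.zpowers ((z : G ⧸ T))) = Nat.card (G ⧸ T) := by
        rw [Nat.card_zpowers, ho, hcard]
      exact Subgroup.eq_top_of_card_eq _ hcardz
    have hmem : ((g : G ⧸ T)) ∈ Subgroup.zpowers ((z : G ⧸ T)) := htop ▸ Subgroup.mem_top _
    obtain ⟨k, hk⟩ := hmem
    have hk' : ((z ^ k : G) : G ⧸ T) = (g : G ⧸ T) := by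
      rw [← hk]; rfl
    have hs : (z ^ k)⁻¹ * g ∈ T := QuotientGroup.eq.mp hk'
    set s : G := (z ^ k)⁻¹ * g with hsdef
    have hg : g = z ^ k * s := by rw [hsdef, mul_inv_cancel_left]
    have h1 : s * t' = t' * s := hTcomm _ _ hs ht'
    have h2 : Commute t' (z ^ k) := Commute.zpow_right (hz t') k
    have hsts : s * t' * s⁻¹ = t' := by rw [h1, mul_inv_cancel_right]
    have hztz : z ^ k * t' * (z ^ k)⁻¹ = t' := by rw [← h2, mul_inv_cancel_right]
    rw [hg]
    calc (z ^ k * s) * t' * (z ^ k * s)⁻¹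
        = z ^ k * (s * t' * s⁻¹) * (z ^ k)⁻¹ := by group
      _ = t' := by rw [hsts]; exact hztz
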